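/- arXiv:1408.5069 — 3 statements merged into one kernel-verified Lean document; each statement's English description precedes it below -/
import Mathlib

section
/- Let L and d be positive integers with L ≥ 3d − 2. Let i, j, k be independent random variables, each uniformly distributed on ℤ/Lℤ, and let A, B, C be the corresponding cyclic intervals {i,…,i+d−1}, {j,…,j+d−1}, {k,…,k+d−1} of length d in ℤ/Lℤ. Then the probability that the three intervals pairwise intersect, i.e. P(A ∩ B ≠ ∅ and B ∩ C ≠ ∅ and A ∩ C ≠ ∅), equals (3d² − 3d + 1)/L². -/
open MeasureTheory

noncomputable section

instance (L : ℕ) : MeasurableSpace (ZMod L) := ⊤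

/-- The cyclic interval `{s, s+1, …, s+d-1}` in `ℤ/Lℤ`. -/
def cycInterval (L : ℕ) (s : ZMod L) (d : ℕ) : Finset (ZMod L) :=
  (Finset.range d).image (fun t : ℕ => s + (t : ZMod L))

open Finset
open scoped ENNReal

instance (L : ℕ) : MeasurableSingletonClass (ZMod L) := ⟨fun _ => trivial⟩

namespace Stmt13Aux


/-- integer interval of allowed differences -/
def I (d : ℕ) : Finset ℤ := Finset.Icc (-(d:ℤ)+1) ((d:ℤ)-1)

/-- hexagon -/
def H (d : ℕ) : Finset (ℤ × ℤ) := ((I d) ×ˢ (I d)).filter (fun p => p.2 - p.1 ∈ I d)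

lemma mem_I {d : ℕ} {z : ℤ} : z ∈ I d ↔ -(d:ℤ)+1 ≤ z ∧ z ≤ (d:ℤ)-1 := Finset.mem_Icc

lemma mem_H {d : ℕ} {p : ℤ × ℤ} :
    p ∈ H d ↔ p.1 ∈ I d ∧ p.2 ∈ I d ∧ p.2 - p.1 ∈ I d := by
  simp [H, Finset.mem_filter, Finset.mem_product, and_assoc]

def pieceA (d : ℕ) : Finset (ℤ × ℤ) := Finset.Icc (1:ℤ) ((d:ℤ)-1) ×ˢ Finset.Icc (0:ℤ) ((d:ℤ)-1)

def pieceB (d : ℕ) : Finset (ℤ × ℤ) :=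
  (Finset.Icc (-(d:ℤ)+1) 0 ×ˢ Finset.Icc (1:ℤ) ((d:ℤ)-1)).image (fun p => (p.1, p.1 + p.2))

def pieceC (d : ℕ) : Finset (ℤ × ℤ) :=
  (Finset.Icc (-(d:ℤ)+1) (-1) ×ˢ Finset.Icc (0:ℤ) ((d:ℤ)-1)).image (fun p => (p.1 + p.2, p.1))

lemma mem_pieceA {d : ℕ} {p : ℤ × ℤ} :
    p ∈ pieceA d ↔ 1 ≤ p.1 ∧ p.1 ≤ (d:ℤ)-1 ∧ 0 ≤ p.2 ∧ p.2 ≤ (d:ℤ)-1 := by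
  simp [pieceA, Finset.mem_product, Finset.mem_Icc, and_assoc]

lemma mem_pieceB {d : ℕ} {p : ℤ × ℤ} :
    p ∈ pieceB d ↔ -(d:ℤ)+1 ≤ p.1 ∧ p.1 ≤ 0 ∧ 1 ≤ p.2 - p.1 ∧ p.2 - p.1 ≤ (d:ℤ)-1 := by
  simp only [pieceB, Finset.mem_image, Finset.mem_product, Finset.mem_Icc]
  constructor
  · rintro ⟨⟨a, b⟩, ⟨⟨h1, h2⟩, h3, h4⟩, rfl⟩
    simp only
    omega
  · intro h
    exact ⟨(p.1, p.2 - p.1), by omega, by simp⟩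

lemma mem_pieceC {d : ℕ} {p : ℤ × ℤ} :
    p ∈ pieceC d ↔ -(d:ℤ)+1 ≤ p.2 ∧ p.2 ≤ -1 ∧ 0 ≤ p.1 - p.2 ∧ p.1 - p.2 ≤ (d:ℤ)-1 := by
  simp only [pieceC, Finset.mem_image, Finset.mem_product, Finset.mem_Icc]
  constructor
  · rintro ⟨⟨a, b⟩, ⟨⟨h1, h2⟩, h3, h4⟩, rfl⟩
    simp only
    omega
  · intro h
    exact ⟨(p.2, p.1 - p.2), by omega, by simp⟩

lemma card_pieceA {d : ℕ} (hd : 0 < d) : (pieceA d).card = (d-1) * d := by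
  rw [pieceA, Finset.card_product, Int.card_Icc, Int.card_Icc]
  have h1 : ((d:ℤ) - 1 + 1 - 1).toNat = d - 1 := by omega
  have h2 : ((d:ℤ) - 1 + 1 - 0).toNat = d := by omega
  rw [h1, h2]

lemma card_pieceB {d : ℕ} (hd : 0 < d) : (pieceB d).card = (d-1) * d := by
  rw [pieceB, Finset.card_image_of_injective _ (fun a b h => ?_),
    Finset.card_product, Int.card_Icc, Int.card_Icc]
  · have h1 : ((0:ℤ) + 1 - (-(d:ℤ)+1)).toNat = d := by omega
    have h2 : ((d:ℤ) - 1 + 1 - 1).toNat = d - 1 := by omega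
    rw [h1, h2, Nat.mul_comm]
  · obtain ⟨h1, h2⟩ := Prod.mk.injEq .. ▸ h
    exact Prod.ext h1 (by omega)

lemma card_pieceC {d : ℕ} (hd : 0 < d) : (pieceC d).card = (d-1) * d := by
  rw [pieceC, Finset.card_image_of_injective _ (fun a b h => ?_),
    Finset.card_product, Int.card_Icc, Int.card_Icc]
  · have h1 : ((-1:ℤ) + 1 - (-(d:ℤ)+1)).toNat = d - 1 := by omega
    have h2 : ((d:ℤ) - 1 + 1 - 0).toNat = d := by omega
    rw [h1, h2]
  · obtain ⟨h1, h2⟩ := Prod.mk.injEq .. ▸ h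
    exact Prod.ext h2 (by omega)

lemma H_eq (d : ℕ) (hd : 0 < d) :
    H d = insert ((0:ℤ), (0:ℤ)) (pieceA d ∪ pieceB d ∪ pieceC d) := by
  ext p
  simp only [mem_H, mem_I, Finset.mem_insert, Finset.mem_union, mem_pieceA, mem_pieceB,
    mem_pieceC, Prod.ext_iff]
  omega

lemma card_H {d : ℕ} (hd : 0 < d) : (H d).card = 3 * ((d-1) * d) + 1 := by
  have hAB : Disjoint (pieceA d) (pieceB d) := by
    rw [Finset.disjoint_left]
    intro p hp hp'
    rw [mem_pieceA] at hp; rw [mem_pieceB] at hp'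
    omega
  have hABC : Disjoint (pieceA d ∪ pieceB d) (pieceC d) := by
    rw [Finset.disjoint_left]
    intro p hp hp'
    rw [Finset.mem_union, mem_pieceA, mem_pieceB] at hp; rw [mem_pieceC] at hp'
    omega
  have h0 : ((0:ℤ),(0:ℤ)) ∉ pieceA d ∪ pieceB d ∪ pieceC d := by
    simp only [Finset.mem_union, mem_pieceA, mem_pieceB, mem_pieceC]
    omega
  rw [H_eq d hd, Finset.card_insert_of_notMem h0, Finset.card_union_of_disjoint hABC,
    Finset.card_union_of_disjoint hAB, card_pieceA hd, card_pieceB hd, card_pieceC hd]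
  ring


def Dset (L d : ℕ) : Finset (ZMod L) := (I d).image (fun z : ℤ => (z : ZMod L))

lemma inter_nonempty_iff {L d : ℕ} (hd : 0 < d) (s s' : ZMod L) :
    (cycInterval L s d ∩ cycInterval L s' d).Nonempty ↔ s' - s ∈ Dset L d := by
  simp only [cycInterval, Dset, Finset.Nonempty, Finset.mem_inter, Finset.mem_image,
    Finset.mem_range, mem_I]
  constructor
  · rintro ⟨x, ⟨t, ht, rfl⟩, ⟨t', ht', h⟩⟩
    refine ⟨(t:ℤ) - t', by omega, ?_⟩
    push_cast
    linear_combination -h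
  · rintro ⟨z, ⟨hz1, hz2⟩, hz⟩
    have key : ((z.toNat : ℤ)) - (((-z).toNat : ℤ)) = z := by omega
    have ht : z.toNat < d := by omega
    have ht' : (-z).toNat < d := by omega
    refine ⟨s + z.toNat, ⟨z.toNat, ht, rfl⟩, ⟨(-z).toNat, ht', ?_⟩⟩
    have := congrArg (fun w : ℤ => (w : ZMod L)) key
    push_cast at this
    linear_combination - this - hz

def Tset (L d : ℕ) [NeZero L] : Finset (ZMod L × ZMod L) :=
  (Finset.univ ×ˢ Finset.univ).filter
    (fun p : ZMod L × ZMod L => p.1 ∈ Dset L d ∧ p.2 ∈ Dset L d ∧ p.2 - p.1 ∈ Dset L d)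

lemma cast_injOn_I {L d : ℕ} [NeZero L] (hdL : 3 * d - 2 ≤ L) (hd : 0 < d) :
    ∀ x ∈ I d, ∀ y ∈ I d, (x : ZMod L) = (y : ZMod L) → x = y := by
  intro x hx y hy h
  rw [mem_I] at hx hy
  rw [ZMod.intCast_eq_intCast_iff_dvd_sub] at h
  have := Int.eq_zero_of_abs_lt_dvd h (abs_lt.mpr ⟨by omega, by omega⟩)
  omega

lemma Tset_eq {L d : ℕ} [NeZero L] (hdL : 3 * d - 2 ≤ L) (hd : 0 < d) :
    Tset L d = (H d).image (fun p : ℤ × ℤ => ((p.1 : ZMod L), (p.2 : ZMod L))) := by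
  ext ⟨u, v⟩
  simp only [Tset, Finset.mem_filter, Finset.mem_product, Finset.mem_univ, true_and,
    Finset.mem_image, Dset, mem_H, Prod.ext_iff]
  constructor
  · rintro ⟨⟨x, hx, rfl⟩, ⟨y, hy, rfl⟩, ⟨z, hz, hz'⟩⟩
    refine ⟨(x, y), ⟨hx, hy, ?_⟩, rfl, rfl⟩
    have : ((y - x : ℤ) : ZMod L) = (z : ZMod L) := by push_cast; rw [hz']
    rw [ZMod.intCast_eq_intCast_iff_dvd_sub] at this
    rw [mem_I] at hx hy hz ⊢
    have h0 := Int.eq_zero_of_abs_lt_dvd this (abs_lt.mpr ⟨by omega, by omega⟩)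
    omega
  · rintro ⟨⟨x, y⟩, ⟨hx, hy, hxy⟩, rfl, rfl⟩
    exact ⟨⟨x, hx, rfl⟩, ⟨y, hy, rfl⟩, ⟨y - x, hxy, by push_cast; ring⟩⟩

lemma card_Tset {L d : ℕ} [NeZero L] (hdL : 3 * d - 2 ≤ L) (hd : 0 < d) :
    (Tset L d).card = (H d).card := by
  rw [Tset_eq hdL hd]
  apply Finset.card_image_of_injOn
  intro p hp q hq h
  rw [Finset.mem_coe, mem_H] at hp hq
  obtain ⟨h1, h2⟩ := Prod.mk.injEq .. ▸ h
  exact Prod.ext (cast_injOn_I hdL hd _ hp.1 _ hq.1 h1)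
    (cast_injOn_I hdL hd _ hp.2.1 _ hq.2.1 h2)


lemma card_Tset_closed {L d : ℕ} [NeZero L] (hdL : 3 * d - 2 ≤ L) (hd : 0 < d) :
    (Tset L d).card = 3 * ((d-1) * d) + 1 := by
  rw [card_Tset hdL hd, card_H hd]

def eventSet (L d : ℕ) [NeZero L] : Finset (Fin 3 → ZMod L) :=
  Finset.univ.filter (fun a =>
    (cycInterval L (a 0) d ∩ cycInterval L (a 1) d).Nonempty ∧
    (cycInterval L (a 1) d ∩ cycInterval L (a 2) d).Nonempty ∧
    (cycInterval L (a 0) d ∩ cycInterval L (a 2) d).Nonempty)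

lemma card_eventSet {L d : ℕ} [NeZero L] (hd : 0 < d) :
    (eventSet L d).card = L * (Tset L d).card := by
  have : (eventSet L d).card = ((Finset.univ : Finset (ZMod L)) ×ˢ Tset L d).card := by
    apply Finset.card_nbij' (fun a => (a 0, (a 1 - a 0, a 2 - a 0)))
      (fun p => ![p.1, p.1 + p.2.1, p.1 + p.2.2])
    · intro a ha
      simp only [Finset.mem_coe, eventSet, Finset.mem_filter, Finset.mem_univ, true_and] at ha
      obtain ⟨h1, h2, h3⟩ := ha
      rw [inter_nonempty_iff hd] at h1 h2 h3
      simp only [Finset.mem_coe, Finset.mem_product, Finset.mem_univ, true_and, Tset, Finset.mem_filter]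
      refine ⟨h1, h3, ?_⟩
      have : a 2 - a 0 - (a 1 - a 0) = a 2 - a 1 := by ring
      rw [this]
      exact h2
    · intro p hp
      simp only [Finset.mem_coe, Finset.mem_product, Finset.mem_univ, true_and, Tset,
        Finset.mem_filter] at hp
      obtain ⟨h1, h2, h3⟩ := hp
      simp only [Finset.mem_coe, eventSet, Finset.mem_filter, Finset.mem_univ, true_and]
      refine ⟨?_, ?_, ?_⟩ <;>
        rw [inter_nonempty_iff hd] <;>
        simp only [Matrix.cons_val_zero, Matrix.cons_val_one, Matrix.head_cons,
          Matrix.cons_val_two, Matrix.tail_cons]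
      · simpa using h1
      · have : p.1 + p.2.2 - (p.1 + p.2.1) = p.2.2 - p.2.1 := by ring
        rw [this]; exact h3
      · simpa using h2
    · intro a ha
      funext i
      fin_cases i <;>
        simp [Matrix.cons_val_zero, Matrix.cons_val_one, Matrix.head_cons,
          Matrix.cons_val_two, Matrix.tail_cons]
    · intro p hp
      simp only [Matrix.cons_val_zero, Matrix.cons_val_one, Matrix.head_cons,
        Matrix.cons_val_two, Matrix.tail_cons]
      ext <;> simp
  rw [this, Finset.card_product, Finset.card_univ, ZMod.card]


end Stmt13Aux

open Stmt13Aux in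
/-- For three independent uniform starting slots in `ℤ/Lℤ` with `L ≥ 3d - 2`,
the probability that the three cyclic awake intervals of length `d` pairwise intersect is
`(3d² - 3d + 1)/L²`. -/
theorem stmt_13 (L d : ℕ) [NeZero L] (hd : 0 < d) (hdL : 3 * d - 2 ≤ L) :
    (Measure.pi fun _ : Fin 3 => (PMF.uniformOfFintype (ZMod L)).toMeasure)
      {a : Fin 3 → ZMod L |
        (cycInterval L (a 0) d ∩ cycInterval L (a 1) d).Nonempty ∧
        (cycInterval L (a 1) d ∩ cycInterval L (a 2) d).Nonempty ∧
        (cycInterval L (a 0) d ∩ cycInterval L (a 2) d).Nonempty}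
      = ENNReal.ofReal ((3 * (d : ℝ) ^ 2 - 3 * d + 1) / (L : ℝ) ^ 2) := by
  set μ := Measure.pi fun _ : Fin 3 => (PMF.uniformOfFintype (ZMod L)).toMeasure with hμ
  have hset : {a : Fin 3 → ZMod L |
        (cycInterval L (a 0) d ∩ cycInterval L (a 1) d).Nonempty ∧
        (cycInterval L (a 1) d ∩ cycInterval L (a 2) d).Nonempty ∧
        (cycInterval L (a 0) d ∩ cycInterval L (a 2) d).Nonempty} = ↑(eventSet L d) := by
    ext a; simp [eventSet]
  rw [hset]
  have hsingle : ∀ a : Fin 3 → ZMod L, μ {a} = ((L : ℝ≥0∞)⁻¹) ^ 3 := by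
    intro a
    have h1 : ({a} : Set (Fin 3 → ZMod L)) = Set.pi Set.univ (fun i => {a i}) := by
      rw [Set.univ_pi_singleton]
    rw [hμ, h1, Measure.pi_pi]
    have h2 : ∀ i : Fin 3,
        (PMF.uniformOfFintype (ZMod L)).toMeasure {a i} = (L : ℝ≥0∞)⁻¹ := by
      intro i
      rw [PMF.toMeasure_apply_singleton _ _ (measurableSet_singleton _),
        PMF.uniformOfFintype_apply, ZMod.card]
    simp only [h2]
    rw [Finset.prod_const, Finset.card_univ, Fintype.card_fin]
  have hcoe : ∀ F : Finset (Fin 3 → ZMod L), μ ↑F = F.card * ((L : ℝ≥0∞)⁻¹) ^ 3 := by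
    intro F
    induction F using Finset.induction with
    | empty => simp
    | @insert b F hbF ih =>
      rw [Finset.coe_insert, Set.insert_eq,
        measure_union (Set.disjoint_singleton_left.mpr (by simpa using hbF))
          (Finset.measurableSet F),
        hsingle, ih, Finset.card_insert_of_notMem hbF]
      push_cast
      ring
  rw [hcoe, card_eventSet hd, card_Tset_closed hdL hd]
  have hL : (L : ℝ≥0∞) ≠ 0 := by
    simpa using (NeZero.ne L)
  have hL' : (L : ℝ≥0∞) ≠ ⊤ := ENNReal.natCast_ne_top L
  have hnum : (3 * (d:ℝ)^2 - 3*d + 1) = ((3 * ((d-1) * d) + 1 : ℕ) : ℝ) := by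
    have h : (((d:ℕ) - 1 : ℕ) : ℝ) = (d : ℝ) - 1 := by
      push_cast [Nat.cast_sub hd]; ring
    push_cast [h]
    ring
  have hLpos : (0:ℝ) < (L:ℝ)^2 := by
    have := Nat.pos_of_ne_zero (NeZero.ne L)
    positivity
  rw [hnum, ENNReal.ofReal_div_of_pos hLpos, ENNReal.ofReal_natCast]
  have h2 : ENNReal.ofReal ((L:ℝ)^2) = (L : ℝ≥0∞)^2 := by
    rw [ENNReal.ofReal_pow (by positivity)]
    norm_num
  set N : ℕ := 3 * ((d-1) * d) + 1 with hN
  rw [h2, div_eq_mul_inv, Nat.cast_mul]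
  calc (L:ℝ≥0∞) * (N:ℝ≥0∞) * ((L:ℝ≥0∞)⁻¹)^3
      = ((L:ℝ≥0∞) * (L:ℝ≥0∞)⁻¹) * ((N:ℝ≥0∞) * ((L:ℝ≥0∞)⁻¹)^2) := by ring
    _ = (N:ℝ≥0∞) * ((L:ℝ≥0∞)⁻¹)^2 := by rw [ENNReal.mul_inv_cancel hL hL', one_mul]
    _ = (N:ℝ≥0∞) * ((L:ℝ≥0∞)^2)⁻¹ := by rw [ENNReal.inv_pow]
end
end

section
/- Let L, d, k be positive integers with d ≤ L, and let A_1,…,A_k be independent random sets, each uniformly distributed among all d-element subsets of {0,1,…,L−1}. Then the probability that every pair of the schedules overlaps, i.e. P(A_i ∩ A_j ≠ ∅ for all 1 ≤ i < j ≤ k), is at least 1 − (k(k+1)/2)·e^{−d²/L}. -/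
open MeasureTheory

noncomputable section

instance (L : ℕ) : MeasurableSpace (Finset (Fin L)) := ⊤

open scoped ENNReal

lemma ratio_bound (L d : ℕ) (hd : 0 < d) (hdL : d ≤ L) :
    ((L - d).choose d : ℝ) / (L.choose d) ≤ Real.exp (-((d : ℝ) ^ 2) / L) := by
  have hL : 0 < L := lt_of_lt_of_le hd hdL
  have hL0 : (0:ℝ) < L := by exact_mod_cast hL
  by_cases h2 : L - d < d
  · rw [Nat.choose_eq_zero_of_lt h2, Nat.cast_zero, zero_div]
    exact (Real.exp_pos _).le
  push_neg at h2
  -- rewrite choose ratio as descFactorial ratio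
  have hdf : ∀ n : ℕ, (n.choose d : ℝ) = (n.descFactorial d : ℝ) / (d.factorial : ℝ) := by
    intro n
    rw [Nat.descFactorial_eq_factorial_mul_choose]
    push_cast
    field_simp
  have hdfL : 0 < (L.descFactorial d : ℝ) := by
    have : L.descFactorial d ≠ 0 := by
      simp [Nat.descFactorial_eq_zero_iff_lt, not_lt.2 hdL]
    exact_mod_cast Nat.pos_of_ne_zero this
  have hfac : (0:ℝ) < (d.factorial : ℝ) := by exact_mod_cast d.factorial_pos
  have key : ((L - d).descFactorial d : ℝ) ≤ (1 - (d:ℝ)/L)^d * (L.descFactorial d : ℝ) := by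
    rw [Nat.descFactorial_eq_prod_range, Nat.descFactorial_eq_prod_range]
    push_cast [Finset.prod_natCast]
    have hpow : (1 - (d:ℝ)/L)^d = ∏ _i ∈ Finset.range d, (1 - (d:ℝ)/L) := by
      simp [Finset.prod_const]
    rw [hpow, ← Finset.prod_mul_distrib]
    apply Finset.prod_le_prod
    · intros; positivity
    · intro i hi
      have hi' : i < d := Finset.mem_range.1 hi
      have h1 : ((L - d - i : ℕ) : ℝ) = (L:ℝ) - d - i := by
        have : i ≤ L - d := le_trans hi'.le h2
        push_cast [Nat.cast_sub this, Nat.cast_sub hdL]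
        ring
      have h2' : ((L - i : ℕ) : ℝ) = (L:ℝ) - i := by
        have : i ≤ L := le_trans hi'.le (le_trans h2 (Nat.sub_le _ _))
        push_cast [Nat.cast_sub this]
        ring
      rw [h1, h2', sub_mul, one_mul]
      have hiL : (i:ℝ) ≤ L := by
        exact_mod_cast (le_trans hi'.le hdL).trans (le_refl L) |>.trans (le_refl L)
      have hfrac : (d:ℝ)/L * ((L:ℝ) - i) ≤ d := by
        rw [div_mul_eq_mul_div, div_le_iff₀ hL0]
        nlinarith [Nat.cast_nonneg (α := ℝ) d, Nat.cast_nonneg (α := ℝ) i]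
      linarith
  have hexp : (1 - (d:ℝ)/L)^d ≤ Real.exp (-((d : ℝ) ^ 2) / L) := by
    have h1 : 1 - (d:ℝ)/L ≤ Real.exp (-((d:ℝ)/L)) := by
      have := Real.add_one_le_exp (-((d:ℝ)/L))
      linarith
    have h0 : 0 ≤ 1 - (d:ℝ)/L := by
      have : (d:ℝ)/L ≤ 1 := by
        rw [div_le_one hL0]; exact_mod_cast hdL
      linarith
    calc (1 - (d:ℝ)/L)^d ≤ (Real.exp (-((d:ℝ)/L)))^d := pow_le_pow_left₀ h0 h1 d
      _ = Real.exp (-((d : ℝ) ^ 2) / L) := by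
          rw [← Real.exp_nat_mul]
          congr 1
          ring
  calc ((L - d).choose d : ℝ) / (L.choose d)
      = ((L - d).descFactorial d : ℝ) / (L.descFactorial d : ℝ) := by
        rw [hdf, hdf]
        field_simp
    _ ≤ (1 - (d:ℝ)/L)^d := by
        rw [div_le_iff₀ hdfL]
        exact key
    _ ≤ _ := hexp

lemma aux_meas {L k : ℕ} (s : Set (Fin k → Finset (Fin L))) : MeasurableSet s :=
  MeasurableSet.of_discrete

lemma pair_bound (L d k : ℕ) (hdL : d ≤ L)
    (hne : ((Finset.univ : Finset (Fin L)).powersetCard d).Nonempty)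
    (i j : Fin k) (hij : i ≠ j) :
    (Measure.pi fun _ : Fin k => (PMF.uniformOfFinset _ hne).toMeasure)
      {A : Fin k → Finset (Fin L) | A i ∩ A j = ∅}
      ≤ ((L - d).choose d : ℝ≥0∞) / (L.choose d : ℝ≥0∞) := by
  classical
  set P := (Finset.univ : Finset (Fin L)).powersetCard d with hP
  set ν := (PMF.uniformOfFinset P hne).toMeasure with hν
  set μ := Measure.pi fun _ : Fin k => ν with hμ
  have hn : P.card = L.choose d := by
    rw [hP, Finset.card_powersetCard, Finset.card_univ, Fintype.card_fin]
  have hnpos : 0 < P.card := Finset.card_pos.2 hne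
  -- the cylinder sets
  set N : Set (Fin k → Finset (Fin L)) :=
    Set.univ.pi (fun t => if t = i then (↑P : Set (Finset (Fin L)))ᶜ else Set.univ) with hN
  set C : Finset (Fin L) → Set (Fin k → Finset (Fin L)) :=
    fun S => Set.univ.pi (fun t => if t = i then {S} else if t = j
      then {T : Finset (Fin L) | T ∩ S = ∅} else Set.univ) with hC
  -- covering
  have hcover : {A : Fin k → Finset (Fin L) | A i ∩ A j = ∅} ⊆ N ∪ ⋃ S ∈ P, C S := by
    intro A hA
    by_cases hAi : A i ∈ P
    · right
      refine Set.mem_biUnion hAi ?_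
      rw [hC]
      intro t _
      by_cases ht : t = i
      · simp [ht]
      · by_cases ht' : t = j
        · subst ht'
          have hA' : A t ∩ A i = ∅ := by rw [Finset.inter_comm]; exact hA
          simp [ht, hA']
        · simp [ht, ht']
    · left
      rw [hN]
      intro t _
      by_cases ht : t = i
      · subst ht; simpa using hAi
      · simp [ht]
  -- measure of N is zero
  have hNzero : μ N = 0 := by
    rw [hN, hμ, Measure.pi_pi]
    refine Finset.prod_eq_zero (Finset.mem_univ i) ?_
    rw [if_pos rfl, hν, PMF.toMeasure_apply_eq_zero_iff _ _,
      PMF.support_uniformOfFinset]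
    exact disjoint_compl_right
    exact MeasurableSet.of_discrete
  -- measure of C S
  have hCS : ∀ S ∈ P, μ (C S) = (P.card : ℝ≥0∞)⁻¹ *
      (((L - d).choose d : ℝ≥0∞) / (P.card : ℝ≥0∞)) := by
    intro S hS
    have hScard : S.card = d := (Finset.mem_powersetCard.1 hS).2
    rw [hC, hμ, Measure.pi_pi]
    rw [← Finset.prod_subset (Finset.subset_univ ({i, j} : Finset (Fin k)))
      (fun t _ ht => by
        have h1 : t ≠ i := fun h => ht (by simp [h])
        have h2 : t ≠ j := fun h => ht (by simp [h])
        simp [h1, h2, hν])]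
    rw [Finset.prod_pair hij]
    have hfi : ν {S} = (P.card : ℝ≥0∞)⁻¹ := by
      rw [hν, PMF.toMeasure_apply_singleton _ _ MeasurableSet.of_discrete,
        PMF.uniformOfFinset_apply_of_mem hne hS]
    have hfj : ν {T : Finset (Fin L) | T ∩ S = ∅} =
        ((L - d).choose d : ℝ≥0∞) / (P.card : ℝ≥0∞) := by
      have hcard : ∀ (inst : DecidablePred fun x => x ∈ {T : Finset (Fin L) | T ∩ S = ∅}),
          (@Finset.filter _ _ inst P).card = (L - d).choose d := by
        intro inst
        have hfilter : @Finset.filter _ _ inst P = Sᶜ.powersetCard d := by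
          ext T
          simp only [Finset.mem_filter, Set.mem_setOf_eq, Finset.mem_powersetCard, hP,
            Finset.subset_univ, true_and]
          constructor
          · rintro ⟨hcard, hint⟩
            refine ⟨?_, hcard⟩
            intro x hx
            simp only [Finset.mem_compl]
            intro hxS
            have : x ∈ T ∩ S := Finset.mem_inter.2 ⟨hx, hxS⟩
            simp [hint] at this
          · rintro ⟨hsub, hcard⟩
            refine ⟨hcard, ?_⟩
            ext x
            simp only [Finset.mem_inter, Finset.notMem_empty, iff_false, not_and]
            intro hxT hxS
            have := hsub hxT
            simp [hxS] at this
        rw [hfilter, Finset.card_powersetCard, Finset.card_compl, hScard, Fintype.card_fin]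
      rw [hν, PMF.toMeasure_uniformOfFinset_apply hne _ MeasurableSet.of_discrete, hcard]
    rw [if_pos rfl, if_neg hij.symm, if_pos rfl, hfi, hfj]
  -- put together
  calc μ {A : Fin k → Finset (Fin L) | A i ∩ A j = ∅}
      ≤ μ (N ∪ ⋃ S ∈ P, C S) := measure_mono hcover
    _ ≤ μ N + μ (⋃ S ∈ P, C S) := measure_union_le _ _
    _ = μ (⋃ S ∈ P, C S) := by rw [hNzero, zero_add]
    _ ≤ ∑ S ∈ P, μ (C S) := measure_biUnion_finset_le _ _
    _ = ∑ S ∈ P, (P.card : ℝ≥0∞)⁻¹ * (((L - d).choose d : ℝ≥0∞) / (P.card : ℝ≥0∞)) :=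
        Finset.sum_congr rfl hCS
    _ = ((L - d).choose d : ℝ≥0∞) / (L.choose d : ℝ≥0∞) := by
        rw [Finset.sum_const, nsmul_eq_mul, ← mul_assoc,
          ENNReal.mul_inv_cancel (by exact_mod_cast hnpos.ne') (by simp), one_mul, hn]

/-- For `k` independent uniformly random `d`-element subsets of an `L`-element
set, the probability that every pair of them intersects is at least
`1 - (k(k+1)/2)·e^{-d²/L}`. -/
theorem stmt_15 (L d k : ℕ) (hd : 0 < d) (hk : 0 < k) (hdL : d ≤ L)
    (hne : ((Finset.univ : Finset (Fin L)).powersetCard d).Nonempty) :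
    1 - ((k : ℝ) * (k + 1) / 2) * Real.exp (-((d : ℝ) ^ 2) / L)
      ≤ ((Measure.pi fun _ : Fin k => (PMF.uniformOfFinset _ hne).toMeasure)
          {A : Fin k → Finset (Fin L) | ∀ i j : Fin k, i ≠ j → (A i ∩ A j).Nonempty}).toReal := by
  classical
  set μ := Measure.pi fun _ : Fin k => (PMF.uniformOfFinset _ hne).toMeasure with hμ
  have hprob : IsProbabilityMeasure μ := inferInstance
  set G : Set (Fin k → Finset (Fin L)) :=
    {A | ∀ i j : Fin k, i ≠ j → (A i ∩ A j).Nonempty} with hG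
  set S : Finset (Fin k × Fin k) := Finset.univ.filter (fun p => p.1 < p.2) with hS
  have hcompl : Gᶜ ⊆ ⋃ p ∈ S, {A : Fin k → Finset (Fin L) | A p.1 ∩ A p.2 = ∅} := by
    intro A hA
    simp only [hG, Set.mem_compl_iff, Set.mem_setOf_eq, not_forall] at hA
    obtain ⟨i, j, hij, hnon⟩ := hA
    rw [Finset.not_nonempty_iff_eq_empty] at hnon
    rcases lt_or_gt_of_ne hij with h | h
    · exact Set.mem_iUnion₂.2 ⟨(i, j), by simp [hS, h], hnon⟩
    · exact Set.mem_iUnion₂.2 ⟨(j, i), by simp [hS, h],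
        by rw [Set.mem_setOf_eq, Finset.inter_comm]; exact hnon⟩
  have hpair : ∀ p ∈ S, μ {A : Fin k → Finset (Fin L) | A p.1 ∩ A p.2 = ∅}
      ≤ ((L - d).choose d : ℝ≥0∞) / (L.choose d : ℝ≥0∞) := by
    intro p hp
    have hlt : p.1 < p.2 := (Finset.mem_filter.1 hp).2
    exact pair_bound L d k hdL hne p.1 p.2 hlt.ne
  have hGc : μ Gᶜ ≤ (S.card : ℝ≥0∞) * (((L - d).choose d : ℝ≥0∞) / (L.choose d : ℝ≥0∞)) := by
    calc μ Gᶜ ≤ μ (⋃ p ∈ S, {A : Fin k → Finset (Fin L) | A p.1 ∩ A p.2 = ∅}) :=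
        measure_mono hcompl
      _ ≤ ∑ p ∈ S, μ {A : Fin k → Finset (Fin L) | A p.1 ∩ A p.2 = ∅} :=
        measure_biUnion_finset_le _ _
      _ ≤ ∑ _p ∈ S, ((L - d).choose d : ℝ≥0∞) / (L.choose d : ℝ≥0∞) :=
        Finset.sum_le_sum hpair
      _ = (S.card : ℝ≥0∞) * (((L - d).choose d : ℝ≥0∞) / (L.choose d : ℝ≥0∞)) := by
        rw [Finset.sum_const, nsmul_eq_mul]
  -- cardinality bound
  have hcard2 : 2 * S.card ≤ k * k := by
    have himg : (Finset.univ.filter (fun p : Fin k × Fin k => p.2 < p.1))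
        = S.map ⟨Prod.swap, Prod.swap_injective⟩ := by
      ext ⟨a, b⟩
      simp only [Finset.mem_filter, Finset.mem_univ, true_and, Finset.mem_map, hS,
        Function.Embedding.coeFn_mk, Prod.exists, Prod.swap_prod_mk, Prod.mk.injEq]
      constructor
      · intro h; exact ⟨b, a, h, rfl, rfl⟩
      · rintro ⟨x, y, h, rfl, rfl⟩; exact h
    have hdisj : Disjoint S (Finset.univ.filter (fun p : Fin k × Fin k => p.2 < p.1)) := by
      rw [Finset.disjoint_left]
      intro p hp hp'
      exact absurd ((Finset.mem_filter.1 hp).2.trans (Finset.mem_filter.1 hp').2) (lt_irrefl _)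
    calc 2 * S.card = S.card + (Finset.univ.filter
          (fun p : Fin k × Fin k => p.2 < p.1)).card := by
          rw [himg, Finset.card_map]; ring
      _ = (S ∪ Finset.univ.filter (fun p : Fin k × Fin k => p.2 < p.1)).card :=
          (Finset.card_union_of_disjoint hdisj).symm
      _ ≤ (Finset.univ : Finset (Fin k × Fin k)).card := Finset.card_le_card (Finset.subset_univ _)
      _ = k * k := by simp [Finset.card_univ]
  have hchoose_pos : 0 < L.choose d := Nat.choose_pos hdL
  have hratio := ratio_bound L d hd hdL
  have hSk : (S.card : ℝ) ≤ (k : ℝ) * (k + 1) / 2 := by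
    have : (2 * S.card : ℝ) ≤ (k : ℝ) * k := by exact_mod_cast hcard2
    have hk0 : (0:ℝ) ≤ k := Nat.cast_nonneg k
    nlinarith
  have hGcR : (μ Gᶜ).toReal ≤ ((k : ℝ) * (k + 1) / 2) * Real.exp (-((d : ℝ) ^ 2) / L) := by
    refine ENNReal.toReal_le_of_le_ofReal (by positivity) (hGc.trans ?_)
    rw [← ENNReal.ofReal_natCast S.card, ← ENNReal.ofReal_natCast ((L - d).choose d),
      ← ENNReal.ofReal_natCast (L.choose d),
      ← ENNReal.ofReal_div_of_pos (by exact_mod_cast hchoose_pos),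
      ← ENNReal.ofReal_mul (Nat.cast_nonneg _)]
    apply ENNReal.ofReal_le_ofReal
    have h0 : (0:ℝ) ≤ ((L - d).choose d : ℝ) / (L.choose d : ℝ) := by positivity
    exact mul_le_mul hSk hratio h0 (by positivity)
  have hsum : (μ G).toReal + (μ Gᶜ).toReal = 1 := by
    rw [← ENNReal.toReal_add (measure_ne_top _ _) (measure_ne_top _ _),
      measure_add_measure_compl (aux_meas _), measure_univ, ENNReal.toReal_one]
  linarith
end
end

section
/- Let L, d, k be positive integers with d ≤ L, and let A_1,…,A_k be independent random sets, each uniformly distributed among all d-element subsets of {0,1,…,L−1}. Then the probability that simultaneously (i) A_i ∩ A_j ≠ ∅ for all 1 ≤ i < j ≤ k and (ii) A_1 ∪ ⋯ ∪ A_k = {0,1,…,L−1} is at least 1 − ((k(k+1)/2)·e^{−d²/L} + L·e^{−dk/L}). -/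
open MeasureTheory

noncomputable section

instance (L : ℕ) : MeasurableSingletonClass (Finset (Fin L)) := ⟨fun _ => trivial⟩

open scoped ENNReal

/-- Counting lemma: the number of ordered pairs `i < j` in `Fin k` is at most `k(k+1)/2`. -/
lemma stmt17_pairs_card (k : ℕ) :
    (((Finset.univ : Finset (Fin k × Fin k)).filter (fun p => p.1 < p.2)).card) * 2 ≤ k * (k+1) := by
  have h1 : (((Finset.univ : Finset (Fin k × Fin k)).filter (fun p => p.1 < p.2)).card)
      = ∑ j : Fin k, (j : ℕ) := by
    rw [Finset.card_eq_sum_card_fiberwise (f := fun p => p.2) (t := Finset.univ)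
      (fun _ _ => Finset.mem_univ _)]
    refine Finset.sum_congr rfl fun j _ => ?_
    have : ((Finset.univ : Finset (Fin k × Fin k)).filter (fun p => p.1 < p.2)).filter
        (fun p => p.2 = j) = Finset.Iio j ×ˢ {j} := by
      ext p
      simp only [Finset.mem_filter, Finset.mem_univ, true_and, Finset.mem_product,
        Finset.mem_Iio, Finset.mem_singleton]
      constructor
      · rintro ⟨h1, h2⟩; subst h2; exact ⟨h1, rfl⟩
      · rintro ⟨h1, h2⟩; subst h2; exact ⟨h1, rfl⟩
    rw [this, Finset.card_product, Finset.card_singleton, Fin.card_Iio, mul_one]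
  rw [h1, Fin.sum_univ_eq_sum_range (fun i => i), Finset.sum_range_id_mul_two]
  exact Nat.mul_le_mul_left _ (by omega)

lemma stmt17_choose_id (n d : ℕ) :
    (n+1) * n.choose d = (n + 1 - d) * (n+1).choose d := by
  have h1 := Nat.add_one_mul_choose_eq n d
  have h2 := Nat.choose_succ_right_eq (n+1) d
  rw [h1, h2]; ring

lemma stmt17_desc_ineq (L d : ℕ) (hdL : d ≤ L) :
    (L-d).descFactorial d * L^d ≤ L.descFactorial d * (L-d)^d := by
  have e1 : L^d = ∏ _i ∈ Finset.range d, L := by simp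
  have e2 : (L-d)^d = ∏ _i ∈ Finset.range d, (L-d) := by simp
  rw [Nat.descFactorial_eq_prod_range, Nat.descFactorial_eq_prod_range, e1, e2,
    ← Finset.prod_mul_distrib, ← Finset.prod_mul_distrib]
  refine Finset.prod_le_prod' fun i hi => ?_
  simp only [Finset.mem_range] at hi
  rcases le_or_gt (d + i) L with h | h
  · zify [show i ≤ L - d by omega, show d ≤ L by omega, show i ≤ L by omega]
    nlinarith
  · have : L - d - i = 0 := by omega
    simp [this]

lemma stmt17_choose_ineq (L d : ℕ) (hdL : d ≤ L) :
    (L-d).choose d * L^d ≤ L.choose d * (L-d)^d := by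
  have h := stmt17_desc_ineq L d hdL
  rw [Nat.descFactorial_eq_factorial_mul_choose, Nat.descFactorial_eq_factorial_mul_choose] at h
  rw [mul_assoc, mul_assoc] at h
  exact Nat.le_of_mul_le_mul_left h (Nat.factorial_pos d)

/-- The probability that a uniform `d`-subset avoids a fixed `d`-subset is at most
`exp (-d²/L)`. -/
lemma stmt17_r2_le (L d : ℕ) (hd : 0 < d) (hdL : d ≤ L) :
    ((L-d).choose d : ℝ) / (L.choose d) ≤ Real.exp (-((d:ℝ)^2) / L) := by
  have hL : (0:ℕ) < L := lt_of_lt_of_le hd hdL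
  have hLr : (0:ℝ) < L := by exact_mod_cast hL
  have hch : (0:ℝ) < L.choose d := by exact_mod_cast Nat.choose_pos hdL
  have h1 : ((L-d).choose d : ℝ) / (L.choose d) ≤ (((L:ℝ) - d)/L)^d := by
    have h := stmt17_choose_ineq L d hdL
    have hcast : ((L-d : ℕ) : ℝ) = (L:ℝ) - d := by
      rw [Nat.cast_sub hdL]
    rw [div_pow, div_le_div_iff₀ hch (by positivity)]
    calc ((L-d).choose d : ℝ) * L^d ≤ (L.choose d : ℝ) * ((L:ℝ)-d)^d := by
          rw [← hcast]; exact_mod_cast h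
      _ = ((L:ℝ)-d)^d * L.choose d := by ring
  refine h1.trans ?_
  have h2 : ((L:ℝ) - d)/L ≤ Real.exp (-(d:ℝ)/L) := by
    have := Real.add_one_le_exp (-(d:ℝ)/L)
    have e : ((L:ℝ) - d)/L = -(d:ℝ)/L + 1 := by field_simp; ring
    rw [e]; exact this
  have hnn : (0:ℝ) ≤ ((L:ℝ) - d)/L := by
    apply div_nonneg _ hLr.le
    have : (d:ℝ) ≤ L := by exact_mod_cast hdL
    linarith
  calc (((L:ℝ) - d)/L)^d ≤ (Real.exp (-(d:ℝ)/L))^d := pow_le_pow_left₀ hnn h2 d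
    _ = Real.exp (-(d:ℝ)^2/L) := by
        rw [← Real.exp_nat_mul]; congr 1; ring

/-- The probability that `k` independent uniform `d`-subsets all avoid a fixed slot is at most
`exp (-dk/L)`. -/
lemma stmt17_r1_le (L d k : ℕ) (hd : 0 < d) (hdL : d ≤ L) :
    (((L-1).choose d : ℝ) / (L.choose d))^k ≤ Real.exp (-((d:ℝ) * k) / L) := by
  have hL : (0:ℕ) < L := lt_of_lt_of_le hd hdL
  have hLr : (0:ℝ) < L := by exact_mod_cast hL
  have hch : (0:ℝ) < L.choose d := by exact_mod_cast Nat.choose_pos hdL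
  have hid : ((L-1).choose d : ℝ) / (L.choose d) = ((L:ℝ) - d)/L := by
    obtain ⟨n, rfl⟩ := Nat.exists_eq_succ_of_ne_zero (Nat.pos_iff_ne_zero.mp hL)
    have h := stmt17_choose_id n d
    have hcast : ((n + 1 - d : ℕ) : ℝ) = ((n:ℝ) + 1) - d := by
      rw [Nat.cast_sub hdL]; push_cast; ring
    have hR : ((n:ℝ) + 1) * (n.choose d) = (((n:ℝ) + 1) - d) * ((n+1).choose d) := by
      rw [← hcast]; exact_mod_cast congrArg (Nat.cast : ℕ → ℝ) h
    have hsimp : (n + 1 - 1 : ℕ) = n := by omega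
    rw [hsimp]
    rw [div_eq_div_iff (ne_of_gt hch) (ne_of_gt hLr)]
    push_cast
    linear_combination hR
  rw [hid]
  have h2 : ((L:ℝ) - d)/L ≤ Real.exp (-(d:ℝ)/L) := by
    have := Real.add_one_le_exp (-(d:ℝ)/L)
    have e : ((L:ℝ) - d)/L = -(d:ℝ)/L + 1 := by field_simp; ring
    rw [e]; exact this
  have hnn : (0:ℝ) ≤ ((L:ℝ) - d)/L := by
    apply div_nonneg _ hLr.le
    have : (d:ℝ) ≤ L := by exact_mod_cast hdL
    linarith
  calc (((L:ℝ) - d)/L)^k ≤ (Real.exp (-(d:ℝ)/L))^k := pow_le_pow_left₀ hnn h2 k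
    _ = Real.exp (-((d:ℝ)*k)/L) := by
        rw [← Real.exp_nat_mul]; congr 1; ring

section Main

variable (L d k : ℕ)

/-- Measure of the event that a fixed slot is uncovered. -/
lemma stmt17_slot (hne : ((Finset.univ : Finset (Fin L)).powersetCard d).Nonempty)
    (s : Fin L) :
    (Measure.pi fun _ : Fin k => (PMF.uniformOfFinset _ hne).toMeasure)
      {A : Fin k → Finset (Fin L) | ∀ i, s ∉ A i}
    = (((L-1).choose d : ℝ≥0∞) / (L.choose d))^k := by
  set ν := (PMF.uniformOfFinset _ hne).toMeasure with hν
  have hset : {A : Fin k → Finset (Fin L) | ∀ i, s ∉ A i}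
      = Set.pi Set.univ (fun _ : Fin k => {B : Finset (Fin L) | s ∉ B}) := by
    ext A; simp [Set.mem_pi]
  rw [hset, Measure.pi_pi]
  have hν1 : ν {B : Finset (Fin L) | s ∉ B} = (((L-1).choose d : ℝ≥0∞) / (L.choose d)) := by
    rw [hν, PMF.toMeasure_uniformOfFinset_apply _ _ MeasurableSpace.measurableSet_top]
    congr 2
    · have hc : ((({s}ᶜ : Finset (Fin L))).powersetCard d).card = (L-1).choose d := by
        rw [Finset.card_powersetCard, Finset.card_compl, Finset.card_singleton,
          Fintype.card_fin]
      rw [← hc]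
      congr 1
      ext B
      simp only [Finset.mem_filter, Finset.mem_powersetCard, Set.mem_setOf_eq,
        Finset.subset_compl_singleton, Finset.subset_univ, true_and]
      tauto
    · rw [Finset.card_powersetCard, Finset.card_univ, Fintype.card_fin]
  simp [hν1]

/-- Measure of the event that two fixed distinct indices give disjoint sets. -/
lemma stmt17_pair (hne : ((Finset.univ : Finset (Fin L)).powersetCard d).Nonempty)
    (i j : Fin k) (hij : i ≠ j) :
    (Measure.pi fun _ : Fin k => (PMF.uniformOfFinset _ hne).toMeasure)
      {A : Fin k → Finset (Fin L) | A i ∩ A j = ∅}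
    ≤ ((L-d).choose d : ℝ≥0∞) / (L.choose d) := by
  classical
  set P := ((Finset.univ : Finset (Fin L)).powersetCard d) with hP
  set ν := (PMF.uniformOfFinset _ hne).toMeasure with hν
  set μ := (Measure.pi fun _ : Fin k => ν) with hμ
  have hN : (P.card : ℝ≥0∞) = (L.choose d : ℝ≥0∞) := by
    rw [hP, Finset.card_powersetCard, Finset.card_univ, Fintype.card_fin]
  have hN0 : (P.card : ℝ≥0∞) ≠ 0 := by
    simp [Finset.card_eq_zero, Finset.nonempty_iff_ne_empty.mp hne]
  have hNtop : (P.card : ℝ≥0∞) ≠ ⊤ := ENNReal.natCast_ne_top _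
  set g : Finset (Fin L) → Fin k → Set (Finset (Fin L)) := fun S =>
    Function.update (Function.update (fun _ => Set.univ) i {S}) j {B | B ∩ S = ∅} with hg
  have hsub : {A : Fin k → Finset (Fin L) | A i ∩ A j = ∅} ⊆
      (Set.pi Set.univ (Function.update (fun _ : Fin k => Set.univ) i ((↑P : Set (Finset (Fin L)))ᶜ)))
      ∪ ⋃ S ∈ P, Set.pi Set.univ (g S) := by
    intro A hA
    simp only [Set.mem_setOf_eq] at hA
    by_cases hAi : A i ∈ P
    · right
      refine Set.mem_biUnion hAi ?_
      intro t _
      have hgA : g (A i) = Function.update (Function.update (fun _ => Set.univ) i {A i}) j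
        {B | B ∩ A i = ∅} := rfl
      rw [hgA]
      rcases eq_or_ne t j with rfl | htj
      · simp only [Function.update_self]
        rw [Set.mem_setOf_eq, Finset.inter_comm]; exact hA
      · rcases eq_or_ne t i with rfl | hti
        · simp [Function.update_of_ne htj]
        · simp [Function.update_of_ne htj, Function.update_of_ne hti]
    · left
      intro t _
      rcases eq_or_ne t i with rfl | hti
      · simp [hAi]
      · simp [Function.update_of_ne hti]
  have hZ : μ (Set.pi Set.univ (Function.update (fun _ : Fin k => Set.univ) i
      ((↑P : Set (Finset (Fin L)))ᶜ))) = 0 := by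
    rw [hμ, Measure.pi_pi]
    have hcompl : ν ((↑P : Set (Finset (Fin L)))ᶜ) = 0 := by
      rw [hν, PMF.toMeasure_apply_eq_zero_iff (hs := MeasurableSpace.measurableSet_top)]
      rw [PMF.support_uniformOfFinset]
      exact disjoint_compl_right
    exact Finset.prod_eq_zero (Finset.mem_univ i) (by simp [hcompl])
  have hcyl : ∀ S ∈ P, μ (Set.pi Set.univ (g S)) =
      (((L-d).choose d : ℝ≥0∞) / (L.choose d)) * (L.choose d : ℝ≥0∞)⁻¹ := by
    intro S hS
    have hScard : S.card = d := (Finset.mem_powersetCard.mp hS).2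
    rw [hμ, Measure.pi_pi]
    have hgS : g S = Function.update (Function.update (fun _ => Set.univ) i {S}) j
        {B | B ∩ S = ∅} := rfl
    rw [hgS]
    set f : Fin k → ℝ≥0∞ := fun t => ν (Function.update (Function.update
      (fun _ => Set.univ) i {S}) j {B | B ∩ S = ∅} t) with hf
    have e1 : ∏ t, f t = f j * ∏ t ∈ Finset.univ.erase j, f t :=
      (Finset.mul_prod_erase _ _ (Finset.mem_univ j)).symm
    have e2 : ∏ t ∈ Finset.univ.erase j, f t
        = f i * ∏ t ∈ (Finset.univ.erase j).erase i, f t :=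
      (Finset.mul_prod_erase _ _ (Finset.mem_erase.mpr ⟨hij, Finset.mem_univ i⟩)).symm
    have e3 : ∏ t ∈ (Finset.univ.erase j).erase i, f t = 1 := by
      refine Finset.prod_eq_one fun t ht => ?_
      have hti : t ≠ i := (Finset.mem_erase.mp ht).1
      have htj : t ≠ j := (Finset.mem_erase.mp (Finset.mem_erase.mp ht).2).1
      simp [hf, Function.update_of_ne htj, Function.update_of_ne hti]
    have ej : f j = ν {B | B ∩ S = ∅} := by simp [hf]
    have ei : f i = ν ({S} : Set (Finset (Fin L))) := by
      simp [hf, Function.update_of_ne hij]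
    rw [e1, e2, e3, ej, ei, mul_one]
    have h1 : ν {B | B ∩ S = ∅} = ((L-d).choose d : ℝ≥0∞) / (L.choose d) := by
      rw [hν, PMF.toMeasure_uniformOfFinset_apply _ _ MeasurableSpace.measurableSet_top]
      congr 2
      · have hc : (((Sᶜ : Finset (Fin L))).powersetCard d).card = (L-d).choose d := by
          rw [Finset.card_powersetCard, Finset.card_compl, hScard, Fintype.card_fin]
        rw [← hc]
        congr 1
        ext B
        simp only [Finset.mem_filter, hP, Finset.mem_powersetCard, Set.mem_setOf_eq,
          Finset.subset_univ, true_and]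
        constructor
        · rintro ⟨hcard, hBS⟩
          refine ⟨fun x hx => Finset.mem_compl.mpr fun hxS => ?_, hcard⟩
          exact Finset.eq_empty_iff_forall_notMem.mp hBS x (Finset.mem_inter.mpr ⟨hx, hxS⟩)
        · rintro ⟨hsub, hcard⟩
          refine ⟨hcard, Finset.eq_empty_iff_forall_notMem.mpr fun x hx => ?_⟩
          rcases Finset.mem_inter.mp hx with ⟨h1, h2⟩
          exact Finset.mem_compl.mp (hsub h1) h2
    have h2 : ν ({S} : Set (Finset (Fin L))) = (L.choose d : ℝ≥0∞)⁻¹ := by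
      rw [hν, PMF.toMeasure_apply_singleton _ _ MeasurableSpace.measurableSet_top,
        PMF.uniformOfFinset_apply_of_mem (ha := hS), hN]
    rw [h1, h2]
  calc μ {A : Fin k → Finset (Fin L) | A i ∩ A j = ∅}
      ≤ μ ((Set.pi Set.univ (Function.update (fun _ : Fin k => Set.univ) i
          ((↑P : Set (Finset (Fin L)))ᶜ))) ∪ ⋃ S ∈ P, Set.pi Set.univ (g S)) := measure_mono hsub
    _ ≤ μ (Set.pi Set.univ (Function.update (fun _ : Fin k => Set.univ) i
          ((↑P : Set (Finset (Fin L)))ᶜ))) + μ (⋃ S ∈ P, Set.pi Set.univ (g S)) :=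
        measure_union_le _ _
    _ ≤ 0 + ∑ S ∈ P, μ (Set.pi Set.univ (g S)) :=
        add_le_add (le_of_eq hZ) (measure_biUnion_finset_le P _)
    _ = ∑ S ∈ P, (((L-d).choose d : ℝ≥0∞) / (L.choose d)) * (L.choose d : ℝ≥0∞)⁻¹ := by
        rw [zero_add]; exact Finset.sum_congr rfl hcyl
    _ = (P.card : ℝ≥0∞) * ((((L-d).choose d : ℝ≥0∞) / (L.choose d)) * (L.choose d : ℝ≥0∞)⁻¹) := by
        rw [Finset.sum_const, nsmul_eq_mul]
    _ = ((L-d).choose d : ℝ≥0∞) / (L.choose d) := by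
        rw [hN, div_eq_mul_inv]
        calc (L.choose d : ℝ≥0∞) * ((((L-d).choose d : ℝ≥0∞) * (L.choose d : ℝ≥0∞)⁻¹) * (L.choose d : ℝ≥0∞)⁻¹)
            = ((L.choose d : ℝ≥0∞) * (L.choose d : ℝ≥0∞)⁻¹) * (((L-d).choose d : ℝ≥0∞) * (L.choose d : ℝ≥0∞)⁻¹) := by ring
          _ = ((L-d).choose d : ℝ≥0∞) * (L.choose d : ℝ≥0∞)⁻¹ := by
              rw [ENNReal.mul_inv_cancel (hN ▸ hN0) (hN ▸ hNtop), one_mul]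

end Main

/-- For `k` independent uniformly random `d`-element subsets of an `L`-element
set of slots, the probability that simultaneously (i) every pair of them intersects and
(ii) every slot is covered by at least one of them is at least
`1 - ((k(k+1)/2)·e^{-d²/L} + L·e^{-dk/L})`. -/
theorem stmt_17 (L d k : ℕ) (hd : 0 < d) (hk : 0 < k) (hdL : d ≤ L)
    (hne : ((Finset.univ : Finset (Fin L)).powersetCard d).Nonempty) :
    1 - (((k : ℝ) * (k + 1) / 2) * Real.exp (-((d : ℝ) ^ 2) / L)
          + (L : ℝ) * Real.exp (-((d : ℝ) * k) / L))
      ≤ ((Measure.pi fun _ : Fin k => (PMF.uniformOfFinset _ hne).toMeasure)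
          {A : Fin k → Finset (Fin L) |
            (∀ i j : Fin k, i ≠ j → (A i ∩ A j).Nonempty) ∧
            (∀ s : Fin L, ∃ i : Fin k, s ∈ A i)}).toReal := by
  classical
  set μ := (Measure.pi fun _ : Fin k => (PMF.uniformOfFinset _ hne).toMeasure) with hμ
  set G : Set (Fin k → Finset (Fin L)) := {A : Fin k → Finset (Fin L) |
      (∀ i j : Fin k, i ≠ j → (A i ∩ A j).Nonempty) ∧
      (∀ s : Fin L, ∃ i : Fin k, s ∈ A i)} with hG
  have hL : (0:ℕ) < L := lt_of_lt_of_le hd hdL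
  have hLr : (0:ℝ) < L := by exact_mod_cast hL
  have hch : (0:ℝ) < L.choose d := by exact_mod_cast Nat.choose_pos hdL
  have hprob : IsProbabilityMeasure μ := by
    rw [hμ]; infer_instance
  -- real bounds
  set e2 : ℝ := Real.exp (-((d : ℝ) ^ 2) / L) with he2
  set e1 : ℝ := Real.exp (-((d : ℝ) * k) / L) with he1
  have he2pos : 0 < e2 := Real.exp_pos _
  have he1pos : 0 < e1 := Real.exp_pos _
  set Q := ((Finset.univ : Finset (Fin k × Fin k)).filter (fun p => p.1 < p.2)) with hQ
  -- the bad set is contained in a union of simple events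
  have hsub : Gᶜ ⊆ (⋃ p ∈ Q, {A : Fin k → Finset (Fin L) | A p.1 ∩ A p.2 = ∅})
      ∪ ⋃ s : Fin L, {A : Fin k → Finset (Fin L) | ∀ i, s ∉ A i} := by
    intro A hA
    simp only [hG, Set.mem_compl_iff, Set.mem_setOf_eq] at hA
    rcases Classical.em (∀ i j : Fin k, i ≠ j → (A i ∩ A j).Nonempty) with hc1 | hc1
    case inr =>
      left
      push_neg at hc1
      obtain ⟨i, j, hij, hempty⟩ := hc1
      rcases lt_or_gt_of_ne hij with hlt | hgt
      · exact Set.mem_iUnion₂.mpr ⟨(i, j), by simp [hQ, hlt], hempty⟩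
      · exact Set.mem_iUnion₂.mpr ⟨(j, i), by simp [hQ, hgt],
          by rw [Set.mem_setOf_eq, Finset.inter_comm]; exact hempty⟩
    case inl =>
      right
      have hc2 : ¬ ∀ s : Fin L, ∃ i : Fin k, s ∈ A i := fun h2 => hA ⟨hc1, h2⟩
      push_neg at hc2
      obtain ⟨s, hs⟩ := hc2
      exact Set.mem_iUnion.mpr ⟨s, hs⟩
  -- bound the bad probability
  have hbound : μ Gᶜ ≤ ENNReal.ofReal (((k : ℝ) * (k + 1) / 2) * e2 + (L : ℝ) * e1) := by
    have hQcard : (Q.card : ℝ) ≤ (k : ℝ) * (k + 1) / 2 := by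
      have := stmt17_pairs_card k
      rw [← hQ] at this
      have : (Q.card * 2 : ℝ) ≤ (k : ℝ) * (k+1) := by exact_mod_cast this
      linarith
    have hpair : ∀ p ∈ Q, μ {A : Fin k → Finset (Fin L) | A p.1 ∩ A p.2 = ∅}
        ≤ ENNReal.ofReal e2 := by
      intro p hp
      have hij : p.1 ≠ p.2 := ne_of_lt (Finset.mem_filter.mp hp).2
      refine (stmt17_pair L d k hne p.1 p.2 hij).trans ?_
      have : (((L-d).choose d : ℝ≥0∞) / (L.choose d))
          = ENNReal.ofReal (((L-d).choose d : ℝ) / (L.choose d)) := by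
        rw [ENNReal.ofReal_div_of_pos hch, ENNReal.ofReal_natCast, ENNReal.ofReal_natCast]
      rw [this]
      exact ENNReal.ofReal_le_ofReal (stmt17_r2_le L d hd hdL)
    have hslot : ∀ s : Fin L, μ {A : Fin k → Finset (Fin L) | ∀ i, s ∉ A i}
        ≤ ENNReal.ofReal e1 := by
      intro s
      rw [hμ, stmt17_slot L d k hne s]
      have : ((((L-1).choose d : ℝ≥0∞)) / (L.choose d))^k
          = ENNReal.ofReal ((((L-1).choose d : ℝ) / (L.choose d))^k) := by
        rw [ENNReal.ofReal_pow (by positivity)]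
        congr 1
        rw [ENNReal.ofReal_div_of_pos hch, ENNReal.ofReal_natCast, ENNReal.ofReal_natCast]
      rw [this]
      exact ENNReal.ofReal_le_ofReal (stmt17_r1_le L d k hd hdL)
    calc μ Gᶜ ≤ μ ((⋃ p ∈ Q, {A : Fin k → Finset (Fin L) | A p.1 ∩ A p.2 = ∅})
          ∪ ⋃ s : Fin L, {A : Fin k → Finset (Fin L) | ∀ i, s ∉ A i}) := measure_mono hsub
      _ ≤ μ (⋃ p ∈ Q, {A : Fin k → Finset (Fin L) | A p.1 ∩ A p.2 = ∅})
          + μ (⋃ s : Fin L, {A : Fin k → Finset (Fin L) | ∀ i, s ∉ A i}) := measure_union_le _ _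
      _ ≤ (∑ p ∈ Q, μ {A : Fin k → Finset (Fin L) | A p.1 ∩ A p.2 = ∅})
          + ∑ s : Fin L, μ {A : Fin k → Finset (Fin L) | ∀ i, s ∉ A i} :=
            add_le_add (measure_biUnion_finset_le Q _) (measure_iUnion_fintype_le μ _)
      _ ≤ (∑ _p ∈ Q, ENNReal.ofReal e2) + ∑ _s : Fin L, ENNReal.ofReal e1 :=
            add_le_add (Finset.sum_le_sum hpair) (Finset.sum_le_sum fun s _ => hslot s)
      _ = (Q.card : ℝ≥0∞) * ENNReal.ofReal e2 + (L : ℝ≥0∞) * ENNReal.ofReal e1 := by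
            rw [Finset.sum_const, nsmul_eq_mul, Finset.sum_const, nsmul_eq_mul,
              Finset.card_univ, Fintype.card_fin]
      _ = ENNReal.ofReal ((Q.card : ℝ) * e2) + ENNReal.ofReal ((L : ℝ) * e1) := by
            rw [ENNReal.ofReal_mul (by positivity), ENNReal.ofReal_mul (by positivity),
              ENNReal.ofReal_natCast, ENNReal.ofReal_natCast]
      _ = ENNReal.ofReal ((Q.card : ℝ) * e2 + (L : ℝ) * e1) := by
            rw [ENNReal.ofReal_add (by positivity) (by positivity)]
      _ ≤ ENNReal.ofReal (((k : ℝ) * (k + 1) / 2) * e2 + (L : ℝ) * e1) := by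
            apply ENNReal.ofReal_le_ofReal
            have : (Q.card : ℝ) * e2 ≤ ((k : ℝ) * (k + 1) / 2) * e2 :=
              mul_le_mul_of_nonneg_right hQcard he2pos.le
            linarith
  -- convert to real numbers
  have hGr : (μ G).toReal = 1 - (μ Gᶜ).toReal := by
    have h1 : μ Gᶜ = 1 - μ G := prob_compl_eq_one_sub (G.toFinite.measurableSet)
    have hle : μ G ≤ 1 := prob_le_one
    rw [h1, ENNReal.toReal_sub_of_le hle ENNReal.one_ne_top, ENNReal.toReal_one]
    ring
  have hbadr : (μ Gᶜ).toReal ≤ ((k : ℝ) * (k + 1) / 2) * e2 + (L : ℝ) * e1 := by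
    have := ENNReal.toReal_mono ENNReal.ofReal_ne_top hbound
    refine this.trans ?_
    rw [ENNReal.toReal_ofReal (by positivity)]
  show 1 - (((k : ℝ) * (k + 1) / 2) * e2 + (L : ℝ) * e1) ≤ (μ G).toReal
  rw [hGr]
  linarith
end
end
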